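/- For every integer m ≥ 5 and every integer j with 2 ≤ j ≤ m-1, ((m-1)(m-2)···(m-j+1))/m^{j-1} < (m - j - 1/2)/(m - j). -/

import Mathlib

theorem stmt_18 (m j : ℕ) (hm : 5 ≤ m) (hj2 : 2 ≤ j) (hjm : j ≤ m - 1) :
    (∏ i ∈ Finset.Icc 1 (j - 1), ((m : ℝ) - i)) / (m : ℝ) ^ (j - 1) <
      ((m : ℝ) - j - 1 / 2) / ((m : ℝ) - j) := by
  have hM : (5:ℝ) ≤ (m:ℝ) := by exact_mod_cast hm
  revert hjm
  induction j, hj2 using Nat.le_induction with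
  | base =>
    intro hjm
    norm_num [Finset.Icc_self]
    rw [div_lt_div_iff₀ (by linarith) (by linarith : (0:ℝ) < (m:ℝ) - 2)]
    nlinarith [hM]
  | succ j hj ih =>
    intro hjm
    obtain ⟨k, rfl⟩ : ∃ k, j = k + 2 := ⟨j - 2, by omega⟩
    have ih' := ih (by omega)
    have hk0 : (0:ℝ) ≤ (k:ℝ) := Nat.cast_nonneg k
    have hk4 : (k:ℝ) + 4 ≤ (m:ℝ) := by exact_mod_cast (by omega : k + 4 ≤ m)
    have hM0 : (0:ℝ) < (m:ℝ) := by linarith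
    have hMk : (0:ℝ) < (m:ℝ) ^ (k+1) := by positivity
    push_cast at ih' ⊢
    have hprod : (∏ i ∈ Finset.Icc 1 (k+2), ((m:ℝ) - (i:ℝ)))
        = (∏ i ∈ Finset.Icc 1 (k+1), ((m:ℝ) - (i:ℝ))) * ((m:ℝ) - ((k:ℝ)+2)) := by
      rw [Finset.prod_Icc_succ_top (by omega : 1 ≤ k + 2)]
      push_cast
      ring
    have hP0 : (0:ℝ) ≤ ∏ i ∈ Finset.Icc 1 (k+1), ((m:ℝ) - (i:ℝ)) := by
      apply Finset.prod_nonneg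
      intro i hi
      simp only [Finset.mem_Icc] at hi
      have : (i:ℝ) ≤ (k:ℝ) + 1 := by exact_mod_cast hi.2
      linarith
    set P := ∏ i ∈ Finset.Icc 1 (k+1), ((m:ℝ) - (i:ℝ)) with hPdef
    have h1 : P * ((m:ℝ) - (k:ℝ) - 2) < ((m:ℝ) - (k:ℝ) - 2 - 1/2) * (m:ℝ)^(k+1) := by
      rw [div_lt_div_iff₀ hMk (by linarith : (0:ℝ) < (m:ℝ) - ((k:ℝ)+2))] at ih'
      linarith
    show (∏ i ∈ Finset.Icc 1 (k+2), ((m:ℝ) - (i:ℝ))) / (m:ℝ)^(k+2)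
        < ((m:ℝ) - ((k:ℝ)+2+1) - 1/2) / ((m:ℝ) - ((k:ℝ)+2+1))
    rw [hprod, div_lt_div_iff₀ (by positivity) (by linarith : (0:ℝ) < (m:ℝ) - ((k:ℝ)+2+1))]
    have h2 : P * ((m:ℝ) - (k:ℝ) - 2) * ((m:ℝ) - (k:ℝ) - 3)
        < ((m:ℝ) - (k:ℝ) - 2 - 1/2) * (m:ℝ)^(k+1) * ((m:ℝ) - (k:ℝ) - 3) :=
      mul_lt_mul_of_pos_right h1 (by linarith)
    have h3 : ((m:ℝ) - (k:ℝ) - 2 - 1/2) * ((m:ℝ) - (k:ℝ) - 3)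
        ≤ ((m:ℝ) - (k:ℝ) - 3 - 1/2) * (m:ℝ) := by
      nlinarith [mul_nonneg hk0 (by linarith : (0:ℝ) ≤ (m:ℝ) - (k:ℝ) - 4)]
    have h4 := mul_le_mul_of_nonneg_left h3 hMk.le
    have hpow : (m:ℝ)^(k+2) = (m:ℝ)^(k+1) * (m:ℝ) := by ring
    nlinarith [h2, h4]
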